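/- Let Γ be a finite connected loopless multigraph with γ vertices, and let M be its Laplacian-type intersection matrix, i.e. M has entries k_{ij} = (number of edges between v_i and v_j) for i ≠ j and k_{ii} = −(degree of v_i). Then for any s, t ∈ {1,…,γ}, the number of spanning trees of Γ equals (−1)^{s+t+γ−1} det(M with the t-th column and s-th row deleted). -/

import Mathlib

/-- A multigraph: a set of edges, each with an unordered pair of endpoints. -/
structure Multigraph (V E : Type) where
  ends : E → Sym2 V

namespace Multigraph

variable {V E : Type}

/-- Adjacency via an edge lying in the subset `S`. -/
def Adj (G : Multigraph V E) (S : Set E) (x y : V) : Prop :=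
  x ≠ y ∧ ∃ e ∈ S, G.ends e = s(x, y)

/-- The subgraph with edge set `S` is connected (and spans `V`). -/
def ConnectedOn (G : Multigraph V E) (S : Set E) : Prop :=
  ∀ x y : V, Relation.ReflTransGen (G.Adj S) x y

def Connected (G : Multigraph V E) : Prop := G.ConnectedOn Set.univ

/-- No edge is a loop. -/
def Loopless (G : Multigraph V E) : Prop := ∀ e : E, ¬ (G.ends e).IsDiag

/-- A spanning tree: a minimally connecting spanning set of edges. -/
def IsSpanningTree (G : Multigraph V E) (S : Finset E) : Prop :=
  G.ConnectedOn (S : Set E) ∧ ∀ e ∈ S, ¬ G.ConnectedOn ((S : Set E) \ {e})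

/-- The complexity: the number of spanning trees. -/
noncomputable def complexity (G : Multigraph V E) : ℕ :=
  {S : Finset E | G.IsSpanningTree S}.ncard

/-- Number of edges joining `x` and `y`. -/
noncomputable def edgeCount (G : Multigraph V E) (x y : V) : ℕ :=
  {e : E | G.ends e = s(x, y)}.ncard

/-- The Laplacian-type intersection matrix. -/
noncomputable def lap (G : Multigraph V E) [Fintype V] [DecidableEq V] (i j : V) : ℤ :=
  if i = j then -(∑ u ∈ Finset.univ.erase i, (G.edgeCount i u : ℤ))
  else (G.edgeCount i j : ℤ)

/-- The lattice of multidegrees of twisters: span of the columns of the Laplacian. -/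
noncomputable def lapLattice (G : Multigraph V E) [Fintype V] [DecidableEq V] :
    AddSubgroup (V → ℤ) :=
  AddSubgroup.closure (Set.range fun j => fun i => G.lap i j)

/-- The subgroup of `ℤ^V` of vectors with zero coordinate sum. -/
def zeroSum (V : Type) [Fintype V] : AddSubgroup (V → ℤ) where
  carrier := {z | ∑ v, z v = 0}
  add_mem' := by
    intro a b ha hb
    simp only [Set.mem_setOf_eq] at *
    simp [Finset.sum_add_distrib, ha, hb]
  zero_mem' := by simp
  neg_mem' := by
    intro a ha
    simp only [Set.mem_setOf_eq] at *
    simp [ha]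

/-- The degree class group of a multigraph. -/
noncomputable def DCG (G : Multigraph V E) [Fintype V] [DecidableEq V] : Type :=
  zeroSum V ⧸ (G.lapLattice.addSubgroupOf (zeroSum V))

noncomputable instance (G : Multigraph V E) [Fintype V] [DecidableEq V] :
    AddCommGroup (G.DCG) :=
  QuotientAddGroup.Quotient.addCommGroup _

/-- The class in the DCG of an element of the zero-sum lattice. -/
noncomputable def DCGclass (G : Multigraph V E) [Fintype V] [DecidableEq V]
    (z : zeroSum V) : G.DCG :=
  QuotientAddGroup.mk z

/-- The element `e_x - e_y` of the zero-sum lattice. -/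
def eDiff (V : Type) [Fintype V] [DecidableEq V] (x y : V) : zeroSum V :=
  ⟨fun v => (if v = x then 1 else 0) - (if v = y then 1 else 0), by
    show ∑ v : V, ((if v = x then (1:ℤ) else 0) - (if v = y then 1 else 0)) = 0
    simp [Finset.sum_sub_distrib]⟩

end Multigraph


open Finset

section MatrixLemmas

variable {R : Type} [CommRing R]

theorem MTT.det_mul_expand {n : ℕ} {E : Type} [Fintype E] [DecidableEq E]
    (A : Matrix (Fin n) E R) (B : Matrix E (Fin n) R) :
    (A * B).det = ∑ f : Fin n → E, (∏ i, A i (f i)) * (B.submatrix f id).det := by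
  have h : (A * B) = Matrix.of fun i => ∑ e ∈ (univ : Finset E), A i e • B e := by
    ext i j
    simp [Matrix.mul_apply, Finset.sum_apply]
  rw [h]
  have expand := (Matrix.detRowAlternating (n := Fin n) (R := R)).toMultilinearMap.map_sum_finset
      (fun (i : Fin n) (e : E) => A i e • B e) (fun _ => (univ : Finset E))
  simp only [AlternatingMap.coe_multilinearMap] at expand
  have h2 : (Matrix.of fun i => ∑ e ∈ (univ : Finset E), A i e • B e).det
      = Matrix.detRowAlternating (fun i => ∑ e ∈ (univ : Finset E), A i e • B e) := rfl
  rw [h2, expand, Fintype.piFinset_univ]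
  refine Finset.sum_congr rfl fun f _ => ?_
  have h3 := (Matrix.detRowAlternating (n := Fin n) (R := R)).toMultilinearMap.map_smul_univ
      (fun i => A i (f i)) (fun i => B (f i))
  simp only [AlternatingMap.coe_multilinearMap] at h3
  rw [h3, smul_eq_mul]
  rfl

theorem MTT.det_submatrix_zero_of_not_injective {n : ℕ} {E : Type}
    (B : Matrix E (Fin n) R) (f : Fin n → E) (hf : ¬ Function.Injective f) :
    (B.submatrix f id).det = 0 := by
  rw [Function.not_injective_iff] at hf
  obtain ⟨i, j, hij, hne⟩ := hf
  exact Matrix.det_zero_of_row_eq hne (by ext k; simp [Matrix.submatrix, hij])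

theorem MTT.cauchy_binet {n : ℕ} {E : Type} [Fintype E] [DecidableEq E] [LinearOrder E]
    (A : Matrix (Fin n) E R) (B : Matrix E (Fin n) R) :
    (A * B).det = ∑ p ∈ (univ : Finset (Fin n → E)).filter (fun p => StrictMono p),
      (A.submatrix id p).det * (B.submatrix p id).det := by
  classical
  set T : (Fin n → E) → R := fun f => (∏ i, A i (f i)) * (B.submatrix f id).det with hT
  have hzero : ∀ f : Fin n → E, ¬ Function.Injective f → T f = 0 := fun f hf => by
    rw [hT]; simp [MTT.det_submatrix_zero_of_not_injective B f hf]
  have lhs : (A * B).det = ∑ f ∈ (univ : Finset (Fin n → E)).filter Function.Injective, T f := by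
    rw [MTT.det_mul_expand, Finset.sum_filter_of_ne]
    intro f _ hf
    by_contra hinj
    exact hf (hzero f hinj)
  have rhs1 : ∀ p ∈ (univ : Finset (Fin n → E)).filter (fun p => StrictMono p),
      (A.submatrix id p).det * (B.submatrix p id).det
        = ∑ g ∈ (univ : Finset (Fin n → Fin n)).filter Function.Injective, T (p ∘ g) := by
    intro p hp
    have hpinj : Function.Injective p := ((Finset.mem_filter.mp hp).2 : StrictMono p).injective
    rw [← Matrix.det_mul, MTT.det_mul_expand]
    rw [show ∑ f : Fin n → Fin n, (∏ i, (A.submatrix id p) i (f i)) * (((B.submatrix p id)).submatrix f id).det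
        = ∑ f : Fin n → Fin n, T (p ∘ f) by
      refine Finset.sum_congr rfl fun g _ => ?_
      simp only [Matrix.submatrix_submatrix, hT]
      rfl]
    rw [Finset.sum_filter_of_ne]
    intro g _ hg
    by_contra hginj
    exact hg (hzero _ fun hc => hginj hc.of_comp)
  rw [lhs, Finset.sum_congr rfl rhs1, ← Finset.sum_product']
  set F : (Fin n → E) → (Fin n → E) × (Fin n → Fin n) := fun f =>
    if h : Function.Injective f then
      ⟨fun i => (Finset.univ.image f).orderEmbOfFin
          (by rw [Finset.card_image_of_injective _ h, card_univ, Fintype.card_fin]) i,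
       fun i => ((Finset.univ.image f).orderIsoOfFin
          (by rw [Finset.card_image_of_injective _ h, card_univ, Fintype.card_fin])).symm
          ⟨f i, by simp⟩⟩
    else ⟨f, id⟩ with hF
  refine Finset.sum_nbij' (i := F) (j := fun pg => pg.1 ∘ pg.2) ?_ ?_ ?_ ?_ ?_
  · -- maps into product
    intro f hf
    have hinj : Function.Injective f := by simpa using (Finset.mem_filter.mp hf).2
    rw [hF]
    simp only [dif_pos hinj]
    rw [Finset.mem_product]
    constructor
    · simp only [Finset.mem_filter, Finset.mem_univ, true_and]
      exact ((Finset.univ.image f).orderEmbOfFin _).strictMono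
    · simp only [Finset.mem_filter, Finset.mem_univ, true_and]
      intro a b hab
      have := congrArg (((Finset.univ.image f).orderIsoOfFin
          (by rw [Finset.card_image_of_injective _ hinj, card_univ, Fintype.card_fin]))) hab
      simp only [OrderIso.apply_symm_apply, Subtype.mk.injEq] at this
      exact hinj this
  · -- backward maps in
    intro pg hpg
    rw [Finset.mem_product] at hpg
    have h1 : StrictMono pg.1 := by simpa using (Finset.mem_filter.mp hpg.1).2
    have h2 : Function.Injective pg.2 := by simpa using (Finset.mem_filter.mp hpg.2).2
    simp only [Finset.mem_filter, Finset.mem_univ, true_and]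
    exact h1.injective.comp h2
  · -- left inverse : (F f).1 ∘ (F f).2 = f
    intro f hf
    have hinj : Function.Injective f := by simpa using (Finset.mem_filter.mp hf).2
    rw [hF]
    simp only [dif_pos hinj]
    funext i
    simp only [Function.comp_apply]
    rw [← Finset.coe_orderIsoOfFin_apply, OrderIso.apply_symm_apply]
  · -- right inverse : F (pg.1 ∘ pg.2) = pg
    intro pg hpg
    rw [Finset.mem_product] at hpg
    have h1 : StrictMono pg.1 := by simpa using (Finset.mem_filter.mp hpg.1).2
    have h2 : Function.Injective pg.2 := by simpa using (Finset.mem_filter.mp hpg.2).2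
    have hinj : Function.Injective (pg.1 ∘ pg.2) := h1.injective.comp h2
    have h2surj : Function.Surjective pg.2 := (Finite.injective_iff_bijective.mp h2).2
    rw [hF]
    simp only [dif_pos hinj]
    have hmem : ∀ x, pg.1 x ∈ Finset.univ.image (pg.1 ∘ pg.2) := by
      intro x
      obtain ⟨y, hy⟩ := h2surj x
      exact Finset.mem_image.mpr ⟨y, Finset.mem_univ y, by simp [hy]⟩
    have hfst : (fun i => (Finset.univ.image (pg.1 ∘ pg.2)).orderEmbOfFin
        (by rw [Finset.card_image_of_injective _ hinj, card_univ, Fintype.card_fin]) i) = pg.1 := by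
      exact (Finset.orderEmbOfFin_unique _ hmem h1).symm
    refine Prod.ext hfst ?_
    funext i
    simp only
    rw [OrderIso.symm_apply_eq]
    apply Subtype.ext
    rw [Finset.coe_orderIsoOfFin_apply]
    exact (congrFun hfst (pg.2 i)).symm ▸ rfl
  · intro f hf
    have hinj : Function.Injective f := by simpa using (Finset.mem_filter.mp hf).2
    have : (F f).1 ∘ (F f).2 = f := by
      rw [hF]
      simp only [dif_pos hinj]
      funext i
      simp only [Function.comp_apply]
      rw [← Finset.coe_orderIsoOfFin_apply, OrderIso.apply_symm_apply]
    rw [this]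

theorem MTT.det_zero_of_col_sums {m : ℕ} (M : Matrix (Fin (m+1)) (Fin (m+1)) ℤ)
    (h : ∀ j, ∑ i, M i j = 0) : M.det = 0 := by
  have hq : (M.map (Int.cast : ℤ → ℚ)).det = 0 := by
    rw [← Matrix.exists_vecMul_eq_zero_iff]
    refine ⟨1, ?_, ?_⟩
    · intro hc
      have := congrFun hc 0
      simp at this
    · funext j
      simp only [Matrix.vecMul, dotProduct, Pi.one_apply, one_mul, Matrix.map_apply]
      rw [← Int.cast_sum, h j]
      simp
  have h2 := RingHom.map_det (Int.castRingHom ℚ) M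
  rw [RingHom.mapMatrix_apply] at h2
  have h3 : ((M.det : ℤ) : ℚ) = 0 := by
    rw [show ((M.det : ℤ) : ℚ) = (Int.castRingHom ℚ) M.det from rfl, h2]
    exact hq
  exact_mod_cast h3

end MatrixLemmas

theorem MTT.det_deleteRow {n : ℕ} (C : Matrix (Fin (n+1)) (Fin n) ℤ)
    (hC : ∀ j, ∑ v, C v j = 0) (u : Fin (n+1)) :
    (C.submatrix u.succAbove id).det = (-1)^(u:ℕ) * (C.submatrix Fin.succ id).det := by
  set Ax : (Fin (n+1) → ℤ) → Matrix (Fin (n+1)) (Fin (n+1)) ℤ :=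
    fun x => Matrix.of fun i => Fin.cons (x i) (fun j => C i j) with hAx
  have h1 : ∀ x : Fin (n+1) → ℤ, (Ax x).det
      = ∑ v : Fin (n+1), (-1)^(v:ℕ) * x v * (C.submatrix v.succAbove id).det := by
    intro x
    rw [Matrix.det_succ_column_zero]
    refine Finset.sum_congr rfl fun v _ => ?_
    have e2 : (Ax x).submatrix v.succAbove Fin.succ = C.submatrix v.succAbove id := by
      ext a b
      simp [hAx, Fin.cons_succ]
    rw [e2]
    rfl
  have hupd : ∀ x : Fin (n+1) → ℤ, Ax x = (Ax 0).updateCol 0 x := by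
    intro x
    ext i k
    rcases Fin.eq_zero_or_eq_succ k with hk | ⟨k', hk⟩ <;> subst hk <;>
      simp [hAx, Matrix.updateCol_apply, Fin.succ_ne_zero]
  have h2 : ∀ x : Fin (n+1) → ℤ, (∑ v, x v) = 0 → (Ax x).det = 0 := by
    intro x hx
    apply MTT.det_zero_of_col_sums
    intro j
    rcases Fin.eq_zero_or_eq_succ j with hj | ⟨j', hj⟩ <;> subst hj
    · simpa [hAx] using hx
    · simpa [hAx, Fin.cons_succ] using hC j'
  have hdiff : (Ax (Pi.single u 1)).det = (Ax (Pi.single 0 1)).det := by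
    have hadd := Matrix.det_updateCol_add (Ax 0) 0 (Pi.single u 1 - Pi.single 0 1) (Pi.single 0 1)
    rw [sub_add_cancel] at hadd
    rw [hupd (Pi.single u 1), hadd, ← hupd, ← hupd, h2 (Pi.single u 1 - Pi.single 0 1) (by simp), zero_add]
  have hu : (Ax (Pi.single u 1)).det = (-1)^(u:ℕ) * (C.submatrix u.succAbove id).det := by
    rw [h1]
    rw [Finset.sum_eq_single u]
    · simp
    · intro v _ hv
      simp [Pi.single_apply, hv]
    · simp
  have h0 : (Ax (Pi.single (0 : Fin (n+1)) 1)).det = (C.submatrix Fin.succ id).det := by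
    rw [h1]
    rw [Finset.sum_eq_single (0 : Fin (n+1))]
    · simp [Fin.succAbove_zero]
    · intro v _ hv
      simp [Pi.single_apply, hv]
    · simp
  have := hdiff.symm.trans hu
  rw [h0] at this
  have hsq : (-1:ℤ)^(u:ℕ) * (-1)^(u:ℕ) = 1 := by
    rw [← pow_add]
    exact Even.neg_one_pow ⟨(u:ℕ), rfl⟩
  calc (C.submatrix u.succAbove id).det
      = ((-1:ℤ)^(u:ℕ) * (-1)^(u:ℕ)) * (C.submatrix u.succAbove id).det := by rw [hsq, one_mul]
    _ = (-1)^(u:ℕ) * ((-1)^(u:ℕ) * (C.submatrix u.succAbove id).det) := by ring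
    _ = (-1)^(u:ℕ) * (C.submatrix Fin.succ id).det := by rw [← this]
namespace MTT
open Multigraph Finset

section Graph

variable {V E : Type}

noncomputable def v1 (G : Multigraph V E) (e : E) : V := (G.ends e).out.1
noncomputable def v2 (G : Multigraph V E) (e : E) : V := (G.ends e).out.2

lemma ends_eq (G : Multigraph V E) (e : E) : G.ends e = s(v1 G e, v2 G e) := by
  show G.ends e = s((G.ends e).out.1, (G.ends e).out.2)
  conv_lhs => rw [← Quot.out_eq (G.ends e)]

lemma v1_ne_v2 {G : Multigraph V E} (hl : G.Loopless) (e : E) : v1 G e ≠ v2 G e := by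
  have h := hl e
  rw [ends_eq G e, Sym2.mk_isDiag_iff] at h
  exact h

/-- Oriented incidence number, valued in a ring `R`. -/
noncomputable def inc (G : Multigraph V E) (R : Type) [Ring R] [DecidableEq V]
    (v : V) (e : E) : R :=
  (if v = v1 G e then 1 else 0) - (if v = v2 G e then 1 else 0)

lemma adj_symm (G : Multigraph V E) (S : Set E) {x y : V} (h : G.Adj S x y) : G.Adj S y x :=
  ⟨h.1.symm, h.2.imp fun e ⟨he, hav⟩ => ⟨he, hav.trans (Sym2.eq_swap)⟩⟩

lemma rtg_symm (G : Multigraph V E) (S : Set E) {x y : V}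
    (h : Relation.ReflTransGen (G.Adj S) x y) : Relation.ReflTransGen (G.Adj S) y x :=
  (haveI : Std.Symm (G.Adj S) := ⟨fun _ _ => adj_symm G S⟩; (Relation.ReflTransGen.symmetric (r := G.Adj S)).symm _ _ h)

lemma exists_comp (G : Multigraph V E) {S : Set E} {x y : V}
    (hxy : ¬ Relation.ReflTransGen (G.Adj S) x y) (z : V) :
    ∃ W : Set V, z ∉ W ∧ ((x ∈ W ∧ y ∉ W) ∨ (y ∈ W ∧ x ∉ W)) ∧
      ∀ v ∈ W, ∀ u, G.Adj S v u → u ∈ W := by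
  by_cases hz : Relation.ReflTransGen (G.Adj S) x z
  · refine ⟨{v | Relation.ReflTransGen (G.Adj S) y v}, ?_, Or.inr ⟨.refl, ?_⟩, ?_⟩
    · intro h0
      exact hxy (hz.trans (rtg_symm G S h0))
    · intro hx
      exact hxy (rtg_symm G S hx)
    · intro v hv u hadj
      exact hv.tail hadj
  · refine ⟨{v | Relation.ReflTransGen (G.Adj S) x v}, hz, Or.inl ⟨.refl, hxy⟩, ?_⟩
    intro v hv u hadj
    exact hv.tail hadj

/-- Removing an edge whose endpoints stay connected preserves connectivity. -/
lemma connectedOn_diff (G : Multigraph V E) {S : Set E} {e₀ : E} (h : G.ConnectedOn S)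
    (hab : Relation.ReflTransGen (G.Adj (S \ {e₀})) (v1 G e₀) (v2 G e₀)) :
    G.ConnectedOn (S \ {e₀}) := by
  have step : ∀ x y, G.Adj S x y → Relation.ReflTransGen (G.Adj (S \ {e₀})) x y := by
    intro x y ⟨hne, f, hf, hends⟩
    by_cases hfe : f = e₀
    · subst hfe
      rw [ends_eq G f, Sym2.eq_iff] at hends
      rcases hends with ⟨h1, h2⟩ | ⟨h1, h2⟩
      · rw [← h1, ← h2]; exact hab
      · rw [← h1, ← h2]; exact rtg_symm G _ hab
    · exact Relation.ReflTransGen.single ⟨hne, f, ⟨hf, hfe⟩, hends⟩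
  intro x y
  induction h x y with
  | refl => exact Relation.ReflTransGen.refl
  | tail _ hadj ih => exact ih.trans (step _ _ hadj)

end Graph

section FinGraph

variable {n : ℕ} {E : Type} (G : Multigraph (Fin (n+1)) E)

/-- Column of the incidence matrix with the row of vertex `0` deleted. -/
noncomputable def col (R : Type) [Ring R] (e : E) : Fin n → R :=
  fun i => inc G R (Fin.succ i) e

lemma sum_inc (R : Type) [Ring R] (e : E) : ∑ v : Fin (n+1), inc G R v e = 0 := by
  simp [inc, Finset.sum_sub_distrib, Finset.sum_ite_eq']

lemma span_top (R : Type) [CommRing R] (hl : G.Loopless) (S : Set E)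
    (hc : G.ConnectedOn S) : Submodule.span R ((fun e => col G R e) '' S) = ⊤ := by
  set M := Submodule.span R ((fun e => col G R e) '' S) with hM
  set φ : Fin (n+1) → (Fin n → R) := fun v i => if Fin.succ i = v then 1 else 0 with hφ
  have hstep : ∀ x y, G.Adj S x y → φ x - φ y ∈ M := by
    rintro x y ⟨hne, e, he, hends⟩
    rw [ends_eq G e, Sym2.eq_iff] at hends
    have hcol : col G R e = φ (v1 G e) - φ (v2 G e) := by
      funext i
      simp [col, inc, hφ]
    have hmem : col G R e ∈ M := Submodule.subset_span ⟨e, he, rfl⟩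
    rcases hends with ⟨h1, h2⟩ | ⟨h1, h2⟩
    · rw [← h1, ← h2, ← hcol]; exact hmem
    · rw [← h1, ← h2]
      rw [show φ (v2 G e) - φ (v1 G e) = -(φ (v1 G e) - φ (v2 G e)) by ring, ← hcol]
      exact neg_mem hmem
  have hφ0 : φ 0 = 0 := by
    funext i
    simp [hφ, Fin.succ_ne_zero]
  have hφmem : ∀ v, φ v ∈ M := by
    intro v
    have h := hc 0 v
    induction h with
    | refl => rw [hφ0]; exact zero_mem M
    | @tail b c _ hadj ih =>
      have h1 := hstep b c hadj
      have : φ c = φ b - (φ b - φ c) := by ring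
      rw [this]
      exact sub_mem ih h1
  rw [Submodule.eq_top_iff']
  intro x
  rw [pi_eq_sum_univ x]
  refine Submodule.sum_mem _ fun i _ => Submodule.smul_mem _ _ ?_
  have : (fun j => if i = j then (1:R) else 0) = φ (Fin.succ i) := by
    funext j
    simp [hφ, Fin.succ_inj, eq_comm]
  rw [this]
  exact hφmem _

end FinGraph
end MTT
namespace MTT
open Multigraph Finset

section FinGraph2

variable {n : ℕ} {E : Type} (G : Multigraph (Fin (n+1)) E)

lemma card_ge [Fintype E] (hl : G.Loopless) (S : Finset E) (hc : G.ConnectedOn ↑S) :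
    n ≤ S.card := by
  classical
  have hspan := span_top G ℚ hl ↑S hc
  have h1 : n = Module.finrank ℚ (Fin n → ℚ) := by
    rw [Module.finrank_pi, Fintype.card_fin]
  have h2 : Module.finrank ℚ (Fin n → ℚ)
      = Module.finrank ℚ (Submodule.span ℚ ((fun e => col G ℚ e) '' ↑S)) := by
    rw [hspan, finrank_top]
  haveI : Fintype ((fun e => col G ℚ e) '' (↑S : Set E)) := (S.finite_toSet.image _).fintype
  have h3 := finrank_span_le_card (R := ℚ) ((fun e => col G ℚ e) '' (↑S : Set E))
  have h4 : ((fun e => col G ℚ e) '' (↑S : Set E)).toFinset.card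
      = ((fun e => col G ℚ e) '' (↑S : Set E)).ncard := (Set.ncard_eq_toFinset_card' _).symm
  have h5 : ((fun e => col G ℚ e) '' (↑S : Set E)).ncard ≤ (↑S : Set E).ncard :=
    Set.ncard_image_le S.finite_toSet
  rw [Set.ncard_coe_finset] at h5
  omega

lemma sum_indicator (W : Set (Fin (n+1))) [DecidablePred (· ∈ W)]
    (h0 : (0:Fin (n+1)) ∉ W) (a : Fin (n+1)) :
    ∑ i : Fin n, (if Fin.succ i ∈ W then (1:ℚ) else 0) * (if Fin.succ i = a then 1 else 0)
      = if a ∈ W then 1 else 0 := by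
  rcases Fin.eq_zero_or_eq_succ a with ha | ⟨a', ha⟩ <;> subst ha
  · rw [if_neg h0]
    apply Finset.sum_eq_zero
    intro i _
    simp [Fin.succ_ne_zero]
  · rw [Finset.sum_eq_single a']
    · simp
    · intro i _ hi
      simp [Fin.succ_inj, hi]
    · simp

lemma dot_col (W : Set (Fin (n+1))) [DecidablePred (· ∈ W)]
    (h0 : (0:Fin (n+1)) ∉ W) (e : E) :
    ∑ i : Fin n, (if Fin.succ i ∈ W then (1:ℚ) else 0) * col G ℚ e i
      = (if v1 G e ∈ W then (1:ℚ) else 0) - (if v2 G e ∈ W then 1 else 0) := by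
  simp only [col, inc, mul_sub]
  rw [Finset.sum_sub_distrib, sum_indicator W h0, sum_indicator W h0]

lemma inc_cast (v : Fin (n+1)) (e : E) : ((inc G ℤ v e : ℤ) : ℚ) = inc G ℚ v e := by
  simp only [inc, Int.cast_sub, apply_ite (Int.cast : ℤ → ℚ), Int.cast_one, Int.cast_zero]

lemma det_int_of_rat {m : ℕ} {M : Matrix (Fin m) (Fin m) ℤ}
    (h : (M.map (Int.cast : ℤ → ℚ)).det = 0) : M.det = 0 := by
  have h2 := RingHom.map_det (Int.castRingHom ℚ) M
  rw [RingHom.mapMatrix_apply] at h2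
  have h3 : ((M.det : ℤ) : ℚ) = 0 := by
    rw [show ((M.det : ℤ) : ℚ) = (Int.castRingHom ℚ) M.det from rfl, h2]
    exact h
  exact_mod_cast h3

/-- Closure of `W` under adjacency kills the pairing with a column. -/
lemma pairing_zero (hl : G.Loopless) (S : Set E) (W : Set (Fin (n+1))) [DecidablePred (· ∈ W)]
    (hcl : ∀ v ∈ W, ∀ u, G.Adj S v u → u ∈ W) {e : E} (he : e ∈ S) :
    (if v1 G e ∈ W then (1:ℚ) else 0) - (if v2 G e ∈ W then 1 else 0) = 0 := by
  have hadj : G.Adj S (v1 G e) (v2 G e) := ⟨v1_ne_v2 hl e, e, he, ends_eq G e⟩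
  by_cases h1 : v1 G e ∈ W
  · rw [if_pos h1, if_pos (hcl _ h1 _ hadj), sub_self]
  · rw [if_neg h1, if_neg fun h2 => h1 (hcl _ h2 _ (adj_symm G S hadj))]
    simp

lemma det_zero_of_not_connected (hl : G.Loopless) [Fintype E] (p : Fin n → E)
    (hnc : ¬ G.ConnectedOn (Set.range p)) :
    (Matrix.of fun i j : Fin n => inc G ℤ (Fin.succ i) (p j)).det = 0 := by
  classical
  apply det_int_of_rat
  rw [← Matrix.exists_vecMul_eq_zero_iff]
  rw [Multigraph.ConnectedOn] at hnc
  push_neg at hnc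
  obtain ⟨x, y, hxy⟩ := hnc
  obtain ⟨W, h0, hmem, hcl⟩ := exists_comp G hxy 0
  refine ⟨fun i => if Fin.succ i ∈ W then (1:ℚ) else 0, ?_, ?_⟩
  · have hw : ∃ w, w ∈ W := by
      rcases hmem with ⟨h, _⟩ | ⟨h, _⟩
      exacts [⟨x, h⟩, ⟨y, h⟩]
    obtain ⟨w, hw⟩ := hw
    have hwne : w ≠ 0 := fun h => h0 (h ▸ hw)
    obtain ⟨w', rfl⟩ := Fin.exists_succ_eq.mpr hwne
    intro hzero
    have := congrFun hzero w'
    rw [if_pos hw] at this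
    simp at this
  · funext j
    have : ∀ i, ((Matrix.of fun i j : Fin n => inc G ℤ (Fin.succ i) (p j)).map
        (Int.cast : ℤ → ℚ)) i j = col G ℚ (p j) i := by
      intro i
      simp [Matrix.map_apply, inc_cast, col]
    simp only [Matrix.vecMul, dotProduct, this]
    rw [dot_col G W h0 (p j)]
    exact pairing_zero G hl (Set.range p) W hcl ⟨j, rfl⟩

lemma det_unit_of_connected (hl : G.Loopless) [Fintype E] (p : Fin n → E)
    (hc : G.ConnectedOn (Set.range p)) :
    ((Matrix.of fun i j : Fin n => inc G ℤ (Fin.succ i) (p j)).det = 1 ∨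
     (Matrix.of fun i j : Fin n => inc G ℤ (Fin.succ i) (p j)).det = -1) := by
  classical
  set M : Matrix (Fin n) (Fin n) ℤ := Matrix.of fun i j : Fin n => inc G ℤ (Fin.succ i) (p j)
    with hM
  have hspan : Submodule.span ℤ (Set.range M.transpose) = ⊤ := by
    have h1 : Set.range M.transpose = (fun e => col G ℤ e) '' Set.range p := by
      rw [← Set.range_comp]
      rfl
    rw [h1]
    exact span_top G ℤ hl (Set.range p) hc
  have hsurj : Function.Surjective M.mulVecLin := by
    rw [← LinearMap.range_eq_top, Matrix.range_mulVecLin]; exact hspan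
  set b : Fin n → (Fin n → ℤ) := fun j => Classical.choose (hsurj (Pi.single j 1)) with hb
  have hbspec : ∀ j, M.mulVec (b j) = Pi.single j 1 := by
    intro j
    have := Classical.choose_spec (hsurj (Pi.single j 1))
    rwa [Matrix.mulVecLin_apply] at this
  set B : Matrix (Fin n) (Fin n) ℤ := Matrix.of fun i j => b j i with hB
  have hMB : M * B = 1 := by
    ext i j
    have h1 : (M * B) i j = M.mulVec (b j) i := by
      simp [Matrix.mul_apply, Matrix.mulVec, dotProduct, hB]
    rw [h1, hbspec j, Matrix.one_apply, Pi.single_apply]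
  have hdet : M.det * B.det = 1 := by
    rw [← Matrix.det_mul, hMB, Matrix.det_one]
  have : IsUnit M.det := IsUnit.of_mul_eq_one _ hdet
  exact Int.isUnit_iff.mp this

end FinGraph2
end MTT
namespace MTT
open Multigraph Finset

section Trees

variable {n : ℕ} {E : Type} (G : Multigraph (Fin (n+1)) E)

lemma tree_of_conn_card [Fintype E] (hl : G.Loopless) (S : Finset E)
    (hcard : S.card = n) (hc : G.ConnectedOn ↑S) : G.IsSpanningTree S := by
  classical
  refine ⟨hc, fun e he hcon => ?_⟩
  rw [← Finset.coe_erase] at hcon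
  have := card_ge G hl (S.erase e) hcon
  have h1 : (S.erase e).card = S.card - 1 := Finset.card_erase_of_mem he
  have h2 : 1 ≤ S.card := Finset.card_pos.mpr ⟨e, he⟩
  omega

lemma tree_card [Fintype E] (hl : G.Loopless) (S : Finset E)
    (hst : G.IsSpanningTree S) : S.card = n := by
  classical
  refine le_antisymm ?_ (card_ge G hl S hst.1)
  by_contra hlt
  push_neg at hlt
  set v : ↥S → (Fin n → ℚ) := fun e => col G ℚ ↑e with hv
  have hni : ¬ LinearIndependent ℚ v := by
    intro h
    have := h.fintype_card_le_finrank
    rw [Fintype.card_coe, Module.finrank_pi, Fintype.card_fin] at this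
    omega
  obtain ⟨g, hsum, e₀, hg0⟩ := Fintype.not_linearIndependent_iff.mp hni
  have hzerocoord : ∀ i, ∑ e : ↥S, g e * v e i = 0 := by
    intro i
    have := congrFun hsum i
    simpa [Finset.sum_apply] using this
  have hab : Relation.ReflTransGen (G.Adj ((↑S : Set E) \ {↑e₀})) (v1 G ↑e₀) (v2 G ↑e₀) := by
    by_contra hnab
    obtain ⟨W, h0, hmem, hcl⟩ := exists_comp G hnab 0
    haveI : DecidablePred (· ∈ W) := Classical.decPred _
    set c : Fin n → ℚ := fun i => if Fin.succ i ∈ W then (1:ℚ) else 0 with hcdef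
    have hpair : ∀ e : ↥S, ∑ i, c i * v e i
        = (if v1 G ↑e ∈ W then (1:ℚ) else 0) - (if v2 G ↑e ∈ W then 1 else 0) :=
      fun e => dot_col G W h0 ↑e
    have htot : ∑ e : ↥S, g e * (∑ i, c i * v e i) = 0 := by
      have : ∑ e : ↥S, g e * (∑ i, c i * v e i) = ∑ i, c i * (∑ e : ↥S, g e * v e i) := by
        simp_rw [Finset.mul_sum]
        rw [Finset.sum_comm]
        congr 1
        funext i
        congr 1
        funext e
        ring
      rw [this]
      refine Finset.sum_eq_zero fun i _ => ?_
      rw [hzerocoord i, mul_zero]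
    have hsingle : ∀ e : ↥S, e ≠ e₀ → g e * (∑ i, c i * v e i) = 0 := by
      intro e hne
      have hmemS : (↑e : E) ∈ (↑S : Set E) \ {↑e₀} :=
        ⟨e.2, fun h => hne (Subtype.ext h)⟩
      rw [hpair e, pairing_zero G hl _ W hcl hmemS, mul_zero]
    rw [Finset.sum_eq_single e₀ (fun e _ hne => hsingle e hne) (fun h => absurd (Finset.mem_univ e₀) h)] at htot
    rw [hpair e₀] at htot
    rcases hmem with ⟨h1, h2⟩ | ⟨h1, h2⟩ <;>
      · rw [if_pos h1, if_neg h2] at htot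
        simp at htot
        exact hg0 (by tauto)
  have hcon := connectedOn_diff G hst.1 hab
  exact hst.2 ↑e₀ e₀.2 hcon

end Trees
end MTT
namespace MTT
open Multigraph Finset

section Lap

variable {n : ℕ} {E : Type} (G : Multigraph (Fin (n+1)) E)

lemma edgeCount_eq [Fintype E] (x y : Fin (n+1)) :
    (G.edgeCount x y : ℤ) = ∑ e, (if G.ends e = s(x,y) then (1:ℤ) else 0) := by
  classical
  unfold Multigraph.edgeCount
  rw [Set.ncard_eq_toFinset_card', Set.toFinset_setOf, Finset.sum_boole]

lemma count_aux [Fintype E] (hl : G.Loopless) (i : Fin (n+1)) (e : E) :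
    ∑ u ∈ Finset.univ.erase i, (if G.ends e = s(i,u) then (1:ℤ) else 0)
      = inc G ℤ i e * inc G ℤ i e := by
  have hab := v1_ne_v2 hl e
  rw [ends_eq G e]
  unfold inc
  by_cases hia : i = v1 G e
  · have hib : i ≠ v2 G e := fun h => hab (hia ▸ h ▸ rfl)
    rw [if_pos hia, if_neg hib]
    have hconv : ∀ u ∈ Finset.univ.erase i,
        (if s(v1 G e, v2 G e) = s(i,u) then (1:ℤ) else 0)
          = (if u = v2 G e then (1:ℤ) else 0) := by
      intro u hu
      refine if_congr ?_ rfl rfl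
      rw [Sym2.eq_iff]
      constructor
      · rintro (⟨h1, h2⟩ | ⟨h1, h2⟩)
        · exact h2.symm
        · exact absurd h2.symm hib
      · rintro rfl
        exact Or.inl ⟨hia.symm, rfl⟩
    rw [Finset.sum_congr rfl hconv,
      Finset.sum_ite_eq' (Finset.univ.erase i) (v2 G e) (fun _ => (1:ℤ))]
    rw [if_pos (Finset.mem_erase.mpr ⟨fun h => hib h.symm, Finset.mem_univ _⟩)]
    norm_num
  · by_cases hib : i = v2 G e
    · rw [if_neg hia, if_pos hib]
      have hconv : ∀ u ∈ Finset.univ.erase i,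
          (if s(v1 G e, v2 G e) = s(i,u) then (1:ℤ) else 0)
            = (if u = v1 G e then (1:ℤ) else 0) := by
        intro u hu
        refine if_congr ?_ rfl rfl
        rw [Sym2.eq_iff]
        constructor
        · rintro (⟨h1, h2⟩ | ⟨h1, h2⟩)
          · exact absurd h1.symm hia
          · exact h1.symm
        · rintro rfl
          exact Or.inr ⟨rfl, hib.symm⟩
      rw [Finset.sum_congr rfl hconv,
        Finset.sum_ite_eq' (Finset.univ.erase i) (v1 G e) (fun _ => (1:ℤ))]
      rw [if_pos (Finset.mem_erase.mpr ⟨fun h => hia h.symm, Finset.mem_univ _⟩)]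
      norm_num
    · rw [if_neg hia, if_neg hib]
      rw [Finset.sum_eq_zero]
      · norm_num
      · intro u hu
        rw [if_neg]
        rw [Sym2.eq_iff]
        rintro (⟨h1, h2⟩ | ⟨h1, h2⟩)
        · exact hia h1.symm
        · exact hib h2.symm

lemma offdiag_aux (hl : G.Loopless) {i j : Fin (n+1)} (hij : i ≠ j) (e : E) :
    inc G ℤ i e * inc G ℤ j e = -(if G.ends e = s(i,j) then (1:ℤ) else 0) := by
  have hab := v1_ne_v2 hl e
  rw [ends_eq G e]
  simp only [Sym2.eq_iff]
  unfold inc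
  by_cases h1 : i = v1 G e <;> by_cases h2 : i = v2 G e <;>
    by_cases h3 : j = v1 G e <;> by_cases h4 : j = v2 G e <;>
    simp_all <;> aesop

lemma lap_eq [Fintype E] (hl : G.Loopless) (i j : Fin (n+1)) :
    G.lap i j = -∑ e, inc G ℤ i e * inc G ℤ j e := by
  classical
  unfold Multigraph.lap
  by_cases hij : i = j
  · subst hij
    rw [if_pos rfl]
    congr 1
    calc ∑ u ∈ univ.erase i, (G.edgeCount i u : ℤ)
        = ∑ u ∈ univ.erase i, ∑ e, (if G.ends e = s(i,u) then (1:ℤ) else 0) :=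
          Finset.sum_congr rfl fun u _ => edgeCount_eq G i u
      _ = ∑ e, ∑ u ∈ univ.erase i, (if G.ends e = s(i,u) then (1:ℤ) else 0) :=
          Finset.sum_comm
      _ = ∑ e, inc G ℤ i e * inc G ℤ i e :=
          Finset.sum_congr rfl fun e _ => count_aux G hl i e
  · rw [if_neg hij, edgeCount_eq,
      show ∑ e, inc G ℤ i e * inc G ℤ j e = ∑ e, -(if G.ends e = s(i,j) then (1:ℤ) else 0) from
        Finset.sum_congr rfl fun e _ => offdiag_aux G hl hij e]
    simp

end Lap
end MTT
open Multigraph in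
/-- The Matrix Tree Theorem: for a finite connected loopless multigraph on `γ = n + 1`
vertices with intersection (Laplacian-type) matrix `M`, the number of spanning trees is
`(-1) ^ (s + t + γ - 1) * det (M with row s and column t deleted)`. -/
theorem matrix_tree_theorem {n : ℕ} {E : Type} [Fintype E]
    (G : Multigraph (Fin (n + 1)) E) (hl : G.Loopless) (hc : G.Connected)
    (s t : Fin (n + 1)) :
    (G.complexity : ℤ) =
      (-1) ^ ((s : ℕ) + (t : ℕ) + n) *
        (Matrix.of fun i j : Fin n => G.lap (s.succAbove i) (t.succAbove j)).det := by
  classical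
  letI : LinearOrder E := LinearOrder.lift' (fun e => (Fintype.equivFin E) e)
    (Equiv.injective _)
  set N : Matrix (Fin (n+1)) E ℤ := Matrix.of fun v e => MTT.inc G ℤ v e with hN
  have hL : (Matrix.of fun i j : Fin n => G.lap (s.succAbove i) (t.succAbove j))
      = -((N.submatrix s.succAbove id) * (N.submatrix t.succAbove id).transpose) := by
    ext i j
    simp only [Matrix.of_apply, Matrix.neg_apply, Matrix.mul_apply, Matrix.submatrix_apply,
      Matrix.transpose_apply, id_eq, hN]
    rw [MTT.lap_eq G hl]
  rw [hL, Matrix.det_neg, Fintype.card_fin, MTT.cauchy_binet]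
  have hterm : ∀ p ∈ (Finset.univ : Finset (Fin n → E)).filter (fun p => StrictMono p),
      ((N.submatrix s.succAbove id).submatrix id p).det *
        (((N.submatrix t.succAbove id).transpose).submatrix p id).det
      = (-1)^((s:ℕ)+(t:ℕ)) * ((N.submatrix Fin.succ p).det)^2 := by
    intro p _
    have hCsum : ∀ j, ∑ v, (N.submatrix id p) v j = 0 := fun j => MTT.sum_inc G ℤ (p j)
    have h1 : ((N.submatrix s.succAbove id).submatrix id p)
        = (N.submatrix id p).submatrix s.succAbove id := rfl
    have h2 : (((N.submatrix t.succAbove id).transpose).submatrix p id)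
        = ((N.submatrix id p).submatrix t.succAbove id).transpose := rfl
    have h3 : (N.submatrix id p).submatrix Fin.succ id = N.submatrix Fin.succ p := rfl
    rw [h1, h2, Matrix.det_transpose, MTT.det_deleteRow _ hCsum s,
      MTT.det_deleteRow _ hCsum t, h3, pow_add]
    ring
  rw [Finset.sum_congr rfl hterm, ← Finset.mul_sum, ← mul_assoc, ← mul_assoc,
    ← pow_add, ← pow_add,
    show (-1:ℤ)^((s:ℕ)+(t:ℕ)+n+n+((s:ℕ)+(t:ℕ))) = 1 from
      Even.neg_one_pow ⟨(s:ℕ)+(t:ℕ)+n, by ring⟩, one_mul]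
  have hsummand : ∀ p ∈ (Finset.univ : Finset (Fin n → E)).filter (fun p => StrictMono p),
      ((N.submatrix Fin.succ p).det)^2
        = (if G.IsSpanningTree (Finset.image p Finset.univ) then (1:ℤ) else 0) := by
    intro p hp
    have hsm : StrictMono p := by simpa using (Finset.mem_filter.mp hp).2
    have hrange : (↑(Finset.image p Finset.univ) : Set E) = Set.range p := by
      rw [Finset.coe_image, Finset.coe_univ, Set.image_univ]
    have hMat : N.submatrix Fin.succ p
        = Matrix.of fun i j : Fin n => MTT.inc G ℤ (Fin.succ i) (p j) := rfl
    have hcard : (Finset.image p Finset.univ).card = n := by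
      rw [Finset.card_image_of_injective _ hsm.injective, Finset.card_univ, Fintype.card_fin]
    by_cases hcn : G.ConnectedOn (Set.range p)
    · rw [if_pos (MTT.tree_of_conn_card G hl _ hcard (by rw [hrange]; exact hcn))]
      rcases MTT.det_unit_of_connected G hl p hcn with h | h <;> rw [hMat, h] <;> norm_num
    · rw [if_neg (fun hst => hcn (by rw [← hrange]; exact hst.1))]
      rw [hMat, MTT.det_zero_of_not_connected G hl p hcn]
      ring
  rw [Finset.sum_congr rfl hsummand, ← Finset.sum_filter, Finset.sum_const,
    nsmul_eq_mul, mul_one]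
  have hcomp : G.complexity
      = ((Finset.univ : Finset (Finset E)).filter (fun S => G.IsSpanningTree S)).card := by
    unfold Multigraph.complexity
    rw [Set.ncard_eq_toFinset_card', Set.toFinset_setOf]
  rw [hcomp]
  congr 1
  refine (Finset.card_bij (fun p _ => Finset.image p Finset.univ) ?_ ?_ ?_).symm
  · intro p hp
    rw [Finset.mem_filter] at hp ⊢
    exact ⟨Finset.mem_univ _, hp.2⟩
  · intro a₁ ha₁ a₂ ha₂ himg'
    have himg : Finset.image a₁ Finset.univ = Finset.image a₂ Finset.univ := himg'
    have h₁ : StrictMono a₁ := by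
      simpa using (Finset.mem_filter.mp (Finset.mem_filter.mp ha₁).1).2
    have h₂ : StrictMono a₂ := by
      simpa using (Finset.mem_filter.mp (Finset.mem_filter.mp ha₂).1).2
    have hc₁ : (Finset.image a₁ Finset.univ).card = n := by
      rw [Finset.card_image_of_injective _ h₁.injective, Finset.card_univ, Fintype.card_fin]
    have e₁ : a₁ = ⇑((Finset.image a₁ Finset.univ).orderEmbOfFin hc₁) :=
      Finset.orderEmbOfFin_unique hc₁
        (fun x => Finset.mem_image_of_mem _ (Finset.mem_univ x)) h₁
    have e₂ : a₂ = ⇑((Finset.image a₁ Finset.univ).orderEmbOfFin hc₁) :=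
      Finset.orderEmbOfFin_unique hc₁
        (fun x => himg ▸ Finset.mem_image_of_mem _ (Finset.mem_univ x)) h₂
    rw [e₁, e₂]
  · intro b hb
    have htree : G.IsSpanningTree b := (Finset.mem_filter.mp hb).2
    have hcard : b.card = n := MTT.tree_card G hl b htree
    set a : Fin n → E := ⇑(b.orderEmbOfFin hcard) with ha
    have hsm : StrictMono a := (b.orderEmbOfFin hcard).strictMono
    have himg : Finset.image a Finset.univ = b := by
      apply Finset.coe_injective
      rw [Finset.coe_image, Finset.coe_univ, Set.image_univ, ha]
      exact Finset.range_orderEmbOfFin b hcard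
    refine ⟨a, ?_, himg⟩
    rw [Finset.mem_filter, Finset.mem_filter]
    exact ⟨⟨Finset.mem_univ _, hsm⟩, by rw [himg]; exact htree⟩
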